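/- Let n be a positive integer, let M be an n×n real symmetric positive semidefinite matrix, and let R be an n×n orthogonal matrix (RᵀR = I). Then trace(R M) ≤ trace(M). -/

import Mathlib

open Matrix

lemma aux_dot_le (n : ℕ) (R : Matrix (Fin n) (Fin n) ℝ) (hR' : R * Rᵀ = 1)
    (w : Fin n → ℝ) : (Rᵀ *ᵥ w) ⬝ᵥ w ≤ w ⬝ᵥ w := by
  set v := Rᵀ *ᵥ w with hv
  have hvv : v ⬝ᵥ v = w ⬝ᵥ w := by
    rw [hv, Matrix.dotProduct_mulVec, vecMul_transpose, mulVec_mulVec, hR', one_mulVec]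
  have hcs : (v ⬝ᵥ w) ^ 2 ≤ (v ⬝ᵥ v) * (w ⬝ᵥ w) := by
    have := Finset.sum_mul_sq_le_sq_mul_sq Finset.univ v w
    simpa [dotProduct, sq, Finset.mul_sum, Finset.sum_mul] using this
  have hww : 0 ≤ w ⬝ᵥ w := Finset.sum_nonneg fun i _ => mul_self_nonneg _
  nlinarith [hcs, hvv, hww]

/-- Key step of the orthogonal Procrustes argument: for a symmetric positive
semidefinite `M` and an orthogonal `R`, `trace(R M) ≤ trace M`. -/
theorem trace_orthogonal_mul_le_of_posSemidef
    (n : ℕ) (hn : 0 < n) (M R : Matrix (Fin n) (Fin n) ℝ)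
    (hsym : Mᵀ = M) (hpsd : ∀ x : Fin n → ℝ, 0 ≤ x ⬝ᵥ M.mulVec x)
    (hR : Rᵀ * R = 1) :
    Matrix.trace (R * M) ≤ Matrix.trace M := by
  have hR' : R * Rᵀ = 1 := mul_eq_one_comm.mp hR
  have hpsd' : M.PosSemidef := .of_dotProduct_mulVec_nonneg hsym (fun x => by simpa using hpsd x)
  open scoped MatrixOrder in
  obtain ⟨A, hA⟩ := CStarAlgebra.nonneg_iff_eq_star_mul_self.mp hpsd'.nonneg
  rw [star_eq_conjTranspose] at hA
  subst hA
  have h1 : Matrix.trace (R * (Aᴴ * A)) = Matrix.trace (A * R * Aᴴ) := by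
    rw [← Matrix.mul_assoc, Matrix.trace_mul_cycle]
  have h2 : Matrix.trace (Aᴴ * A) = Matrix.trace (A * Aᴴ) := Matrix.trace_mul_comm _ _
  rw [h1, h2]
  have key : ∀ i, (A * R * Aᴴ) i i ≤ (A * Aᴴ) i i := by
    intro i
    have e1 : (A * R * Aᴴ) i i = (Rᵀ *ᵥ (A i)) ⬝ᵥ (A i) := by
      simp [Matrix.mul_apply, mulVec, dotProduct, Finset.sum_mul, mul_comm, mul_assoc,
        mul_left_comm]
    have e2 : (A * Aᴴ) i i = (A i) ⬝ᵥ (A i) := by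
      simp [Matrix.mul_apply, dotProduct]
    rw [e1, e2]
    exact aux_dot_le n R hR' (A i)
  exact Finset.sum_le_sum fun i _ => key i
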